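/- Let x be a real number and let d, P be integers with P ≥ 1 and gcd(d, P) = 1. If |x − d/P| < 1/(2P²), then d/P is a convergent of the continued fraction expansion of x. (This is the fact used in Shor's algorithm: the measured value y/Q satisfies |y/Q − d/P| ≤ 1/(2P²), so d/P can be recovered from y/Q by the continued fraction algorithm.) -/
import Mathlib

/-- If `x` is a real number, `P ≥ 1`, `gcd(d, P) = 1` and `|x − d/P| < 1/(2P²)`,
then `d/P` is a convergent of the continued fraction expansion of `x`. -/
theorem shor_continued_fraction_convergent (x : ℝ) (d P : ℤ) (hP : 1 ≤ P)
    (hgcd : Int.gcd d P = 1) (hx : |x - (d : ℝ) / P| < 1 / (2 * (P : ℝ) ^ 2)) :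
    ∃ n : ℕ, (d : ℝ) / P = (GenContFract.of x).convs n := by
  have hPnat : P.toNat ≠ 0 := by omega
  have hcop : d.natAbs.Coprime P.toNat := by
    have : P.natAbs = P.toNat := by omega
    rwa [Int.gcd, this] at hgcd
  set q : ℚ := ⟨d, P.toNat, hPnat, hcop⟩ with hq
  have hden : (q.den : ℤ) = P := by simp [hq]; omega
  have hnum : q.num = d := rfl
  have hcast : ((q : ℚ) : ℝ) = (d : ℝ) / P := by
    rw [Rat.cast_def, hnum]
    congr 1
    exact_mod_cast congrArg (fun z : ℤ => (z : ℝ)) hden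
  have h' : |x - (q : ℝ)| < 1 / (2 * (q.den : ℝ) ^ 2) := by
    rw [hcast]
    have : ((q.den : ℝ)) = (P : ℝ) := by exact_mod_cast congrArg (fun z : ℤ => (z : ℝ)) hden
    rw [this]; exact hx
  obtain ⟨n, hn⟩ := Real.exists_convs_eq_rat h'
  exact ⟨n, by rw [← hcast, hn]⟩
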